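/- Let q be a prime power. The set of affine points of the Hermitian curve, H = {(x,y) ∈ F_{q^2}^2 : x^{q+1} = y^q + y}, has exactly q^3 elements. -/
import Mathlib

open Polynomial

/-- Root-count bound: the set of roots of `X^n + c•X`-type polynomials. -/
lemma herm_aux_roots {F : Type*} [Field F] [Fintype F] (f : F[X]) (hf : f ≠ 0) :
    Nat.card {y : F | f.eval y = 0} ≤ f.natDegree := by
  classical
  have hsub : {y : F | f.eval y = 0} ⊆ (f.roots.toFinset : Set F) := by
    intro y hy
    simp only [Finset.coe_sort_coe, Multiset.mem_toFinset, Finset.mem_coe]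
    exact (Polynomial.mem_roots hf).2 hy
  calc Nat.card {y : F | f.eval y = 0}
      = ({y : F | f.eval y = 0} : Set F).ncard := Nat.card_coe_set_eq _
    _ ≤ ((f.roots.toFinset : Set F)).ncard :=
        Set.ncard_le_ncard hsub (Set.toFinite _)
    _ = f.roots.toFinset.card := Set.ncard_coe_finset _
    _ ≤ Multiset.card f.roots := Multiset.toFinset_card_le _
    _ ≤ f.natDegree := Polynomial.card_roots' f

set_option maxHeartbeats 1000000 in
/-- Let `q` be a prime power. The set of affine points of the Hermitian curve,
`H = {(x,y) ∈ F_{q^2}^2 : x^{q+1} = y^q + y}`, has exactly `q^3` elements. -/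
theorem hermitian_curve_card (q : ℕ) (hq : IsPrimePow q)
    (F : Type*) [Field F] [Fintype F] (hF : Fintype.card F = q ^ 2) :
    {p : F × F | p.1 ^ (q + 1) = p.2 ^ q + p.2}.ncard = q ^ 3 := by
  classical
  obtain ⟨p, k, hp0, hk, hq'⟩ := hq
  have hp : p.Prime := hp0.nat_prime
  haveI : Fact p.Prime := ⟨hp⟩
  subst hq'
  set n : ℕ := p ^ k with hn
  have hn1 : 1 < n := Nat.one_lt_pow (by omega) hp.one_lt
  have hn0 : 0 < n := by omega
  -- characteristic is p
  haveI : CharP F p := by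
    obtain ⟨m, hr, hcard⟩ := FiniteField.card F (ringChar F)
    have hpr : p = ringChar F := by
      have hdvd : p ∣ ringChar F ^ (m : ℕ) := by
        rw [← hcard, hF, hn]
        exact dvd_pow (dvd_pow_self p (by omega)) (by norm_num)
      exact ((Nat.prime_dvd_prime_iff_eq hp hr).1 (hp.dvd_of_dvd_pow hdvd))
    exact hpr ▸ ringChar.charP F
  -- the additive (trace-like) map T y = y^q + y
  set T : F →+ F :=
    { toFun := fun y => y ^ n + y
      map_zero' := by simp [hn, zero_pow (by positivity : p ^ k ≠ 0)]
      map_add' := fun a b => by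
        show (a + b) ^ p ^ k + (a + b) = (a ^ p ^ k + a) + (b ^ p ^ k + b)
        rw [add_pow_char_pow]; ring } with hTdef
  have hT : ∀ y : F, T y = y ^ n + y := fun _ => rfl
  have hfrob : ∀ a b : F, (a + b) ^ n = a ^ n + b ^ n := fun a b => add_pow_char_pow ..
  have hkey : ∀ a : F, (a ^ n) ^ n = a := by
    intro a
    rw [← pow_mul, ← sq, ← hF]
    exact FiniteField.pow_card a
  -- the "subfield" of q-fixed points
  set K : Set F := {z : F | z ^ n = z} with hK
  have hKcard : Nat.card K ≤ n := by
    have hdX : (X : F[X]).degree < (n : ℕ) :=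
      lt_of_le_of_lt degree_X_le (by exact_mod_cast hn1)
    have hmon : (X ^ n - X : F[X]).Monic := monic_X_pow_sub hdX
    have hb := herm_aux_roots (X ^ n - X : F[X]) hmon.ne_zero
    have hdeg : (X ^ n - X : F[X]).natDegree ≤ n := by
      refine (natDegree_sub_le _ _).trans ?_
      simp [natDegree_X_pow]; omega
    have hset : {y : F | (X ^ n - X : F[X]).eval y = 0} = K := by
      ext z; simp [hK, sub_eq_zero]
    rw [hset] at hb
    exact hb.trans hdeg
  have hkerle : Nat.card T.ker ≤ n := by
    have hdX : (X : F[X]).degree < (n : ℕ) :=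
      lt_of_le_of_lt degree_X_le (by exact_mod_cast hn1)
    have hmon : (X ^ n + X : F[X]).Monic := monic_X_pow_add hdX
    have hb := herm_aux_roots (X ^ n + X : F[X]) hmon.ne_zero
    have hdeg : (X ^ n + X : F[X]).natDegree ≤ n := by
      refine (natDegree_add_le _ _).trans ?_
      simp [natDegree_X_pow]; omega
    have hset : {y : F | (X ^ n + X : F[X]).eval y = 0} = (T.ker : Set F) := by
      ext z; simp [AddMonoidHom.mem_ker, hT]
    rw [hset] at hb
    exact hb.trans hdeg
  have hrangesub : (T.range : Set F) ⊆ K := by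
    rintro z ⟨y, rfl⟩
    show (y ^ n + y) ^ n = y ^ n + y
    rw [hfrob, hkey, add_comm]
  have hrangele : Nat.card T.range ≤ n := by
    calc Nat.card T.range = (T.range : Set F).ncard := Nat.card_coe_set_eq _
      _ ≤ K.ncard := Set.ncard_le_ncard hrangesub (Set.toFinite _)
      _ = Nat.card K := (Nat.card_coe_set_eq _).symm
      _ ≤ n := hKcard
  have hprod : Nat.card T.range * Nat.card T.ker = n ^ 2 := by
    have h1 := AddSubgroup.card_eq_card_quotient_mul_card_addSubgroup T.ker
    have h2 : Nat.card (F ⧸ T.ker) = Nat.card T.range :=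
      Nat.card_congr (QuotientAddGroup.quotientKerEquivRange T).toEquiv
    rw [h2] at h1
    rw [← h1, Nat.card_eq_fintype_card, hF]
  have hkpos : 0 < Nat.card T.ker := Nat.card_pos
  have hrpos : 0 < Nat.card T.range := Nat.card_pos
  have hker : Nat.card T.ker = n := by nlinarith
  have hrange : Nat.card T.range = n := by nlinarith
  -- range T = K, hence every x^(q+1) is in the range
  have hrangeK : (T.range : Set F) = K := by
    refine Set.eq_of_subset_of_ncard_le hrangesub ?_ (Set.toFinite _)
    have hr2 : ((T.range : Set F)).ncard = n := by
      rw [← Nat.card_coe_set_eq]; exact hrange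
    have hK2 : K.ncard ≤ n := by
      rw [← Nat.card_coe_set_eq]; exact hKcard
    rw [hr2]; exact hK2
  have hmem : ∀ x : F, ∃ y0 : F, T y0 = x ^ (n + 1) := by
    intro x
    have hxK : x ^ (n + 1) ∈ K := by
      show (x ^ (n + 1)) ^ n = x ^ (n + 1)
      rw [← pow_mul, add_mul, one_mul, pow_add, pow_mul, hkey, pow_succ, mul_comm]
    rw [← hrangeK] at hxK
    exact hxK
  -- each fiber has exactly `n` points
  have hfiber : ∀ x : F, Nat.card {y : F // x ^ (n + 1) = y ^ n + y} = n := by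
    intro x
    obtain ⟨y0, hy0⟩ := hmem x
    have e : {y : F // x ^ (n + 1) = y ^ n + y} ≃ T.ker :=
      { toFun := fun y => ⟨y.1 - y0, by
          rw [AddMonoidHom.mem_ker, map_sub, hy0, hT, ← y.2, sub_self]⟩
        invFun := fun z => ⟨z.1 + y0, by
          have hz : T z.1 = 0 := z.2
          rw [← hT, map_add, hz, zero_add, hy0]⟩
        left_inv := fun y => by simp
        right_inv := fun z => by simp }
    rw [Nat.card_congr e, hker]
  -- assemble
  haveI : ∀ x : F, Fintype {y : F // x ^ (n + 1) = y ^ n + y} := fun x =>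
    Fintype.ofFinite _
  have hfibF : ∀ x : F, Fintype.card {y : F // x ^ (n + 1) = y ^ n + y} = n := fun x => by
    rw [← Nat.card_eq_fintype_card, hfiber x]
  calc {pt : F × F | pt.1 ^ (n + 1) = pt.2 ^ n + pt.2}.ncard
      = Nat.card {pt : F × F // pt.1 ^ (n + 1) = pt.2 ^ n + pt.2} :=
        (Nat.card_coe_set_eq _).symm
    _ = Nat.card (Σ x : F, {y : F // x ^ (n + 1) = y ^ n + y}) :=
        Nat.card_congr (Equiv.subtypeProdEquivSigmaSubtype (α := F) (β := F) fun a b => a ^ (n + 1) = b ^ n + b)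
    _ = ∑ x : F, Fintype.card {y : F // x ^ (n + 1) = y ^ n + y} := by
        rw [Nat.card_eq_fintype_card, Fintype.card_sigma]
    _ = ∑ _x : F, n := by
        exact Finset.sum_congr rfl fun x _ => hfibF x
    _ = Fintype.card F * n := by rw [Finset.sum_const, Finset.card_univ, smul_eq_mul]
    _ = n ^ 3 := by rw [hF]; ring
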